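/- arXiv:0909.4582 — 3 statements merged into one kernel-verified Lean document; each statement's English description precedes it below -/
import Mathlib

section
/- Let M be a loopless matroid on a finite ground set E, let F_1 ⊆ F_2 ⊆ ⋯ ⊆ F_k be a chain of flats of M, and let λ_1, …, λ_k be nonnegative real numbers. Then the vector v = λ_1·1_{F_1} + ⋯ + λ_k·1_{F_k} lies in the Bergman set B(M): for every circuit C of M, the minimum of v over C is attained at at least two distinct elements of C. -/
/-- A circuit of a matroid is a minimal dependent set. -/
def Matroid.Circuit {α : Type*} (M : Matroid α) (C : Set α) : Prop :=
  M.Dep C ∧ ∀ D ⊂ C, ¬ M.Dep D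

/-- A matroid is loopless if every singleton contained in the ground set is independent. -/
def Matroid.Loopless' {α : Type*} (M : Matroid α) : Prop :=
  ∀ e ∈ M.E, M.Indep {e}

/-- A vector `v : α → ℝ` lies in the Bergman set `B(M)` if for every circuit `C` of `M`
the minimum of `v` over `C` is attained at at least two distinct elements of `C`. -/
def Matroid.InBergman {α : Type*} (M : Matroid α) (v : α → ℝ) : Prop :=
  ∀ C, M.Circuit C → ∃ e ∈ C, ∃ f ∈ C, e ≠ f ∧
    (∀ g ∈ C, v e ≤ v g) ∧ (∀ g ∈ C, v f ≤ v g)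

/-- A nonnegative combination of the indicator vectors of a chain of
flats of a loopless matroid `M` on a finite ground set lies in the Bergman set `B(M)`. -/
theorem combination_of_chain_of_flats_mem_bergman
    {α : Type*} {M : Matroid α} (hfin : M.E.Finite) (hloop : M.Loopless')
    {k : ℕ} (F : Fin k → Set α) (hmono : Monotone F) (hflat : ∀ i, M.IsFlat (F i))
    (l : Fin k → ℝ) (hl : ∀ i, 0 ≤ l i) :
    M.InBergman (fun e => ∑ i, l i * Set.indicator (F i) (1 : α → ℝ) e) := by
  classical
  set v : α → ℝ := fun e => ∑ i, l i * Set.indicator (F i) (1 : α → ℝ) e with hv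
  intro C hC
  obtain ⟨hCdep, hCmin⟩ := hC
  have hCE : C ⊆ M.E := hCdep.subset_ground
  have hCfin : C.Finite := hfin.subset hCE
  -- C has at least two elements
  obtain ⟨e0, he0⟩ := hCdep.nonempty
  have hnontriv : ∃ f ∈ C, f ≠ e0 := by
    by_contra h
    push_neg at h
    have : C = {e0} := Set.eq_singleton_iff_unique_mem.2 ⟨he0, h⟩
    exact hCdep.not_indep (this ▸ hloop e0 (hCE he0))
  obtain ⟨f0, hf0C, hf0e0⟩ := hnontriv
  -- a minimizer of v on C
  obtain ⟨e, heC, hemin⟩ := hCfin.toFinset.exists_min_image v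
    (by simpa using ⟨e0, by simpa using he0⟩)
  rw [Set.Finite.mem_toFinset] at heC
  have hemin : ∀ g ∈ C, v e ≤ v g := fun g hg => hemin g (hCfin.mem_toFinset.2 hg)
  by_cases hsec : ∃ f ∈ C, f ≠ e ∧ v f ≤ v e
  · obtain ⟨f, hfC, hfe, hfle⟩ := hsec
    exact ⟨e, heC, f, hfC, fun h => hfe h.symm, hemin,
      fun g hg => le_trans hfle (hemin g hg)⟩
  push_neg at hsec
  exfalso
  -- every other element of C is in some flat not containing e
  have key : ∀ f ∈ C, f ≠ e → ∃ i, f ∈ F i ∧ e ∉ F i := by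
    intro f hfC hfe
    by_contra h
    push_neg at h
    have : v f ≤ v e := by
      apply Finset.sum_le_sum
      intro i _
      by_cases hfi : f ∈ F i
      · rw [Set.indicator_of_mem hfi, Set.indicator_of_mem (h i hfi)]
        simp
      · rw [Set.indicator_of_notMem hfi, mul_zero]
        exact mul_nonneg (hl i) (Set.indicator_nonneg (fun _ _ => zero_le_one) e)
    exact absurd this (not_le.2 (hsec f hfC hfe))
  -- the set of indices whose flat misses e
  have hne' : ∃ f ∈ C, f ≠ e := by
    rcases eq_or_ne e0 e with rfl | h
    · exact ⟨f0, hf0C, hf0e0⟩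
    · exact ⟨e0, he0, h⟩
  obtain ⟨f1, hf1C, hf1e⟩ := hne'
  obtain ⟨i1, _, hi1⟩ := key f1 hf1C hf1e
  set s : Finset (Fin k) := Finset.univ.filter (fun i => e ∉ F i) with hs
  have hsne : s.Nonempty := ⟨i1, by simp [hs, hi1]⟩
  set i := s.max' hsne with hi
  have heFi : e ∉ F i := by
    have := s.max'_mem hsne
    simpa [hs] using this
  have hsub : C \ {e} ⊆ F i := by
    intro f hf
    obtain ⟨hfC, hfe⟩ := hf
    obtain ⟨j, hfj, hej⟩ := key f hfC hfe
    have hjs : j ∈ s := by simp [hs, hej]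
    exact hmono (s.le_max' j hjs) hfj
  -- e is in the closure of C \ {e}
  have hindep : M.Indep (C \ {e}) := by
    rw [← M.not_dep_iff ((Set.diff_subset).trans hCE)]
    exact hCmin _ (Set.sdiff_singleton_ssubset.2 heC)
  have hecl : e ∈ M.closure (C \ {e}) := by
    rw [hindep.mem_closure_iff_of_notMem (by simp)]
    rwa [Set.insert_diff_singleton, Set.insert_eq_of_mem heC]
  have : e ∈ F i := by
    have h1 : M.closure (C \ {e}) ⊆ M.closure (F i) := M.closure_subset_closure hsub
    have h2 : M.closure (F i) = F i := (hflat i).closure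
    exact h2 ▸ h1 hecl
  exact heFi this
end

section
/- Let M be a loopless matroid of rank d+1 (with d ≥ 1) on a finite ground set E, let C be a circuit of M, and let e, f be two distinct elements of C. Then there exists a chain F_1 ⊊ F_2 ⊊ ⋯ ⊊ F_d of proper flats of M with rk_M(F_i) = i for each i, such that for every i either both e and f belong to F_i or neither does. -/
/-- The rank of a set `X` in a matroid: the supremum of the cardinalities of the
independent sets contained in `X`. -/
noncomputable def Matroid.rk {α : Type*} (M : Matroid α) (X : Set α) : ℕ :=
  sSup {n : ℕ | ∃ I, M.Indep I ∧ I ⊆ X ∧ I.ncard = n}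

open Set

/-- The closure of any set is a flat. -/
lemma Matroid.flat_closure_aux {α : Type*} (M : Matroid α) (X : Set α) :
    M.IsFlat (M.closure X) := by
  refine ⟨fun I Y hI hIY => ?_, M.closure_subset_ground X⟩
  have h1 : M.closure I = M.closure (M.closure X) := hI.closure_eq_closure
  have h2 : M.closure I = M.closure Y := hIY.closure_eq_closure
  have h3 : Y ⊆ M.closure Y := M.subset_closure Y hIY.subset_ground
  rw [← h2, h1, M.closure_closure] at h3
  exact h3

/-- If `J` is a basis for `X` in a matroid with finite ground set, then `M.rk X = J.ncard`. -/
lemma Matroid.rk_eq_of_basis_aux {α : Type*} {M : Matroid α} (hfin : M.E.Finite)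
    {X J : Set α} (hJ : M.IsBasis J X) : M.rk X = J.ncard := by
  have hXE : X ⊆ M.E := hJ.subset_ground
  have hub : ∀ n ∈ {n : ℕ | ∃ I, M.Indep I ∧ I ⊆ X ∧ I.ncard = n}, n ≤ J.ncard := by
    rintro n ⟨I, hI, hIX, rfl⟩
    obtain ⟨J', hJ', hIJ'⟩ := hI.subset_isBasis_of_subset hIX hXE
    have hJ'fin : J'.Finite := hfin.subset hJ'.indep.subset_ground
    have hcard : J'.ncard = J.ncard := by
      rw [Set.ncard_def, hJ'.encard_eq_encard hJ, ← Set.ncard_def]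
    exact (Set.ncard_le_ncard hIJ' hJ'fin).trans hcard.le
  have hmem : J.ncard ∈ {n : ℕ | ∃ I, M.Indep I ∧ I ⊆ X ∧ I.ncard = n} :=
    ⟨J, hJ.indep, hJ.subset, rfl⟩
  exact le_antisymm (csSup_le ⟨_, hmem⟩ hub) (le_csSup ⟨J.ncard, hub⟩ hmem)

/-- If `C` is a circuit of a loopless matroid `M` of rank `d + 1`
(`d ≥ 1`) on a finite ground set and `e ≠ f` are elements of `C`, then there is a full
flag `F 0 ⊊ ⋯ ⊊ F (d-1)` of proper flats with `rk (F i) = i + 1` such that each flat of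
the flag contains either both of `e, f` or neither of them. -/
theorem exists_full_flag_not_separating_circuit_pair
    {α : Type*} {M : Matroid α} (hfin : M.E.Finite) (hloop : M.Loopless')
    {d : ℕ} (hd : 1 ≤ d) (hrk : M.rk M.E = d + 1)
    {C : Set α} (hC : M.Circuit C) {e f : α} (he : e ∈ C) (hf : f ∈ C) (hef : e ≠ f) :
    ∃ F : Fin d → Set α, StrictMono F ∧ (∀ i, M.IsFlat (F i)) ∧ (∀ i, F i ≠ M.E) ∧
      (∀ i : Fin d, M.rk (F i) = (i : ℕ) + 1) ∧
      ∀ i, (e ∈ F i ∧ f ∈ F i) ∨ (e ∉ F i ∧ f ∉ F i) := by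
  classical
  obtain ⟨hCdep, hCmin⟩ := hC
  have hCE : C ⊆ M.E := hCdep.subset_ground
  have hindep : ∀ D ⊂ C, M.Indep D := by
    intro D hD
    by_contra hni
    exact hCmin D hD ⟨hni, hD.subset.trans hCE⟩
  -- basic membership facts
  have heI0 : e ∉ C \ ({e, f} : Set α) := fun h => h.2 (Or.inl rfl)
  have hfI0 : f ∉ C \ ({e, f} : Set α) := fun h => h.2 (Or.inr rfl)
  have hfCe : f ∈ C \ ({e} : Set α) := ⟨hf, fun h => hef (mem_singleton_iff.mp h).symm⟩
  have heCf : e ∈ C \ ({f} : Set α) := ⟨he, fun h => hef (mem_singleton_iff.mp h)⟩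
  have hCess : C \ ({e} : Set α) ⊂ C :=
    ssubset_of_subset_of_ne diff_subset (fun h => (h.symm ▸ he : e ∈ C \ ({e} : Set α)).2 rfl)
  have hCfss : C \ ({f} : Set α) ⊂ C :=
    ssubset_of_subset_of_ne diff_subset (fun h => (h.symm ▸ hf : f ∈ C \ ({f} : Set α)).2 rfl)
  have hI0ss : C \ ({e, f} : Set α) ⊂ C :=
    ssubset_of_subset_of_ne diff_subset (fun h => heI0 (h.symm ▸ he))
  have hCe : M.Indep (C \ ({e} : Set α)) := hindep _ hCess
  have hI0indep : M.Indep (C \ ({e, f} : Set α)) := hindep _ hI0ss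
  have hI0Ce : C \ ({e, f} : Set α) ⊆ C \ ({e} : Set α) :=
    diff_subset_diff_right (singleton_subset_iff.mpr (Or.inl rfl))
  have hI0Cf : C \ ({e, f} : Set α) ⊆ C \ ({f} : Set α) :=
    diff_subset_diff_right (singleton_subset_iff.mpr (Or.inr rfl))
  -- e is in the closure of C \ {e}
  have heCe : e ∈ M.closure (C \ ({e} : Set α)) := by
    rw [hCe.mem_closure_iff_of_notMem (fun h => h.2 rfl)]
    rwa [insert_diff_singleton, insert_eq_of_mem he]
  -- C \ {e} = insert f (C \ {e, f})
  have hCeI0 : C \ ({e} : Set α) = insert f (C \ ({e, f} : Set α)) := by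
    ext x
    simp only [mem_diff, mem_insert_iff, mem_singleton_iff]
    constructor
    · rintro ⟨hx, hxe⟩
      by_cases hxf : x = f
      · exact Or.inl hxf
      · exact Or.inr ⟨hx, fun h => h.elim hxe hxf⟩
    · rintro (rfl | ⟨hx, hx2⟩)
      · exact ⟨hf, fun h => hef h.symm⟩
      · exact ⟨hx, fun h => hx2 (Or.inl h)⟩
  -- a basis B of M containing C \ {e}
  obtain ⟨B, hB, hCeB⟩ := hCe.subset_isBasis_of_subset (diff_subset.trans hCE)
  have hBindep := hB.indep
  have hBE : B ⊆ M.E := hBindep.subset_ground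
  have hBfin : B.Finite := hfin.subset hBE
  have hBcard : B.ncard = d + 1 := (Matroid.rk_eq_of_basis_aux hfin hB).symm.trans hrk
  have hfB : f ∈ B := hCeB hfCe
  have hI0B : C \ ({e, f} : Set α) ⊆ B := hI0Ce.trans hCeB
  -- lists enumerating C \ {e,f} and B \ (C \ {e})
  have hI0fin : (C \ ({e, f} : Set α)).Finite := hfin.subset ((diff_subset).trans hCE)
  have hRfin : (B \ (C \ ({e} : Set α))).Finite := hBfin.subset diff_subset
  set l1 : List α := hI0fin.toFinset.toList with hl1def
  set l2 : List α := hRfin.toFinset.toList with hl2def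
  have hml1 : ∀ x, x ∈ l1 ↔ x ∈ C \ ({e, f} : Set α) := by
    intro x; rw [hl1def, Finset.mem_toList, Set.Finite.mem_toFinset]
  have hml2 : ∀ x, x ∈ l2 ↔ x ∈ B \ (C \ ({e} : Set α)) := by
    intro x; rw [hl2def, Finset.mem_toList, Set.Finite.mem_toFinset]
  set L : List α := l1 ++ f :: l2 with hLdef
  have hmemL : ∀ x, x ∈ L ↔ x ∈ B := by
    intro x
    rw [hLdef, List.mem_append, List.mem_cons, hml1, hml2]
    constructor
    · rintro (hx | rfl | hx)
      · exact hI0B hx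
      · exact hfB
      · exact hx.1
    · intro hxB
      by_cases hxCe : x ∈ C \ ({e} : Set α)
      · rw [hCeI0] at hxCe
        rcases hxCe with rfl | hx
        · exact Or.inr (Or.inl rfl)
        · exact Or.inl hx
      · exact Or.inr (Or.inr ⟨hxB, hxCe⟩)
  have hLnd : L.Nodup := by
    rw [hLdef, List.nodup_append]
    refine ⟨Finset.nodup_toList _, ?_, ?_⟩
    · rw [List.nodup_cons]
      exact ⟨fun h => ((hml2 f).mp h).2 hfCe, Finset.nodup_toList _⟩
    · intro a ha b hmem hab; subst hab
      have haI0 : a ∈ C \ ({e, f} : Set α) := (hml1 a).mp ha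
      rcases List.mem_cons.mp hmem with rfl | ha2
      · exact hfI0 haI0
      · exact ((hml2 a).mp ha2).2 (hI0Ce haI0)
  have hLen : L.length = d + 1 := by
    have h1 : (B : Set α) = (L.toFinset : Set α) := by
      ext x
      simp only [Finset.mem_coe, List.mem_toFinset]
      exact (hmemL x).symm
    rw [h1, Set.ncard_coe_finset, List.toFinset_card_of_nodup hLnd] at hBcard
    exact hBcard
  -- the chain of independent sets
  set T : ℕ → Set α := fun k => {x | x ∈ L.take k} with hTdef
  have hTB : ∀ k, T k ⊆ B := fun k x hx => (hmemL x).mp (List.take_subset _ _ hx)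
  have hTindep : ∀ k, M.Indep (T k) := fun k => hBindep.subset (hTB k)
  have hTE : ∀ k, T k ⊆ M.E := fun k => (hTB k).trans hBE
  have hTcard : ∀ k, k ≤ d + 1 → (T k).ncard = k := by
    intro k hk
    have h1 : T k = ((L.take k).toFinset : Set α) := by
      ext x; simp [hTdef]
    rw [h1, Set.ncard_coe_finset,
      List.toFinset_card_of_nodup (hLnd.sublist (List.take_sublist k L)),
      List.length_take, hLen]
    exact min_eq_left hk
  have hTmono : ∀ j k : ℕ, j ≤ k → T j ⊆ T k := by
    intro j k hjk x hx
    have h1 : L.take j = (L.take k).take j := by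
      rw [List.take_take, min_eq_left hjk]
    rw [hTdef] at hx ⊢
    simp only [mem_setOf_eq] at hx ⊢
    rw [h1] at hx
    exact List.take_subset _ _ hx
  -- get elements
  have hgetmem : ∀ (j : ℕ) (hj : j < L.length), L[j] ∈ T (j + 1) := by
    intro j hj
    show L[j] ∈ L.take (j + 1)
    rw [List.take_succ]
    refine List.mem_append.mpr (Or.inr ?_)
    rw [List.getElem?_eq_getElem hj]
    simp
  have hgetnotmem : ∀ (j : ℕ) (hj : j < L.length) (k : ℕ), k ≤ j → L[j] ∉ T k := by
    intro j hj k hk hmem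
    have hdisj : List.Disjoint (L.take k) (L.drop k) := by
      have := hLnd
      rw [← List.take_append_drop k L, List.nodup_append] at this
      exact fun a ha hb => this.2.2 a ha a hb rfl
    have hdrop : L[j] ∈ L.drop k := by
      have h1 : j - k < (L.drop k).length := by
        rw [List.length_drop]
        omega
      have h2 : (L.drop k)[j - k] = L[j] := by
        rw [List.getElem_drop]
        congr 1
        omega
      rw [← h2]
      exact List.getElem_mem h1
    exact hdisj hmem hdrop
  -- elements of B outside T k are not in the closure of T k
  have hnotcl : ∀ (k : ℕ) (x : α), x ∈ B → x ∉ T k → x ∉ M.closure (T k) := by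
    intro k x hxB hxT
    have hins : M.Indep (insert x (T k)) := hBindep.subset (insert_subset hxB (hTB k))
    exact fun hcl => (((hTindep k).insert_indep_iff_of_notMem hxT).mp hins).2 hcl
  -- the flag
  refine ⟨fun i => M.closure (T ((i : ℕ) + 1)), ?_, ?_, ?_, ?_, ?_⟩
  · -- StrictMono
    intro i j hij
    have hij' : (i : ℕ) < (j : ℕ) := hij
    have hjlen : (j : ℕ) < L.length := by rw [hLen]; omega
    refine ssubset_of_subset_of_ne
      (M.closure_subset_closure (hTmono _ _ (by omega))) (fun hEq => ?_)
    have hx1 : L[(j : ℕ)] ∈ M.closure (T ((j : ℕ) + 1)) :=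
      M.subset_closure _ (hTE _) (hgetmem _ hjlen)
    have hx2 : L[(j : ℕ)] ∉ M.closure (T ((i : ℕ) + 1)) :=
      hnotcl _ _ ((hmemL _).mp (List.getElem_mem hjlen)) (hgetnotmem _ hjlen _ (by omega))
    exact hx2 ((show M.closure (T ((i : ℕ) + 1)) = M.closure (T ((j : ℕ) + 1)) from hEq) ▸ hx1)
  · exact fun i => M.flat_closure_aux _
  · -- proper
    intro i hEq
    have hdlen : d < L.length := by rw [hLen]; omega
    have hx2 : L[d] ∉ M.closure (T ((i : ℕ) + 1)) :=
      hnotcl _ _ ((hmemL _).mp (List.getElem_mem hdlen)) (hgetnotmem _ hdlen _ (by omega))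
    have hEq' : M.closure (T ((i : ℕ) + 1)) = M.E := hEq
    exact hx2 (by rw [hEq']; exact hBE ((hmemL _).mp (List.getElem_mem hdlen)))
  · -- rank
    intro i
    rw [Matroid.rk_eq_of_basis_aux hfin (hTindep ((i : ℕ) + 1)).isBasis_closure]
    exact hTcard _ (by omega)
  · -- both or neither
    intro i
    set m := l1.length with hmdef
    have hTtake : ∀ k : ℕ, L.take k = l1.take k ++ (f :: l2).take (k - m) := by
      intro k; rw [hLdef, List.take_append]
    by_cases hcase : (i : ℕ) + 1 ≤ m
    · -- T (i+1) ⊆ C \ {e, f}; neither e nor f in the closure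
      right
      have hsub : T ((i : ℕ) + 1) ⊆ C \ ({e, f} : Set α) := by
        intro x hx
        have hx' : x ∈ L.take ((i : ℕ) + 1) := hx
        rw [hTtake, Nat.sub_eq_zero_of_le hcase, List.take_zero, List.append_nil] at hx'
        exact (hml1 x).mp (List.take_subset _ _ hx')
      constructor
      · intro hecl
        have heT : e ∉ T ((i : ℕ) + 1) := fun h => heI0 (hsub h)
        have hdep : M.Dep (insert e (T ((i : ℕ) + 1))) :=
          ((hTindep _).mem_closure_iff_of_notMem heT).mp hecl
        have hss : insert e (T ((i : ℕ) + 1)) ⊂ C :=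
          lt_of_le_of_lt (insert_subset heCf ((hsub).trans hI0Cf)) hCfss
        exact hCmin _ hss hdep
      · intro hfcl
        have hfT : f ∉ T ((i : ℕ) + 1) := fun h => hfI0 (hsub h)
        have hdep : M.Dep (insert f (T ((i : ℕ) + 1))) :=
          ((hTindep _).mem_closure_iff_of_notMem hfT).mp hfcl
        have hss : insert f (T ((i : ℕ) + 1)) ⊂ C :=
          lt_of_le_of_lt (insert_subset hfCe ((hsub).trans hI0Ce)) hCess
        exact hCmin _ hss hdep
    · -- C \ {e} ⊆ T (i+1); both e and f in the closure
      left
      have hCeT : C \ ({e} : Set α) ⊆ T ((i : ℕ) + 1) := by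
        rw [hCeI0]
        intro x hx
        show x ∈ L.take ((i : ℕ) + 1)
        rw [hTtake, List.take_of_length_le (by omega : l1.length ≤ (i : ℕ) + 1)]
        obtain ⟨k, hk⟩ : ∃ k, (i : ℕ) + 1 - m = k + 1 := ⟨(i : ℕ) - m, by omega⟩
        rw [hk]
        rcases hx with rfl | hxI0
        · exact List.mem_append.mpr (Or.inr List.mem_cons_self)
        · exact List.mem_append.mpr (Or.inl ((hml1 x).mpr hxI0))
      constructor
      · exact M.closure_subset_closure hCeT heCe
      · exact M.subset_closure _ (hTE _) (hCeT hfCe)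
end

section
/- Let M be a loopless matroid of rank d+1 on a finite ground set E, and let v : E → ℝ. Then v is constant on each connected component of M if and only if for every chain F_1 ⊊ ⋯ ⊊ F_d of proper flats of M with rk_M(F_i) = i, the vector v lies in the ℝ-linear span of {1_{F_1}, …, 1_{F_d}, 1_E}. (Equivalently, the intersection of the linear spans of the maximal cones of the matroid fan Δ_M, together with 1_E, is the span of the indicator vectors of the connected components of M.) -/
/-- Two elements are connected in `M` if some circuit of `M` contains both; the
connected components of `M` are the classes of the equivalence relation this generates. -/
def Matroid.ConnectedTo {α : Type*} (M : Matroid α) (e f : α) : Prop :=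
  Relation.EqvGen (fun x y => ∃ C, M.Circuit C ∧ x ∈ C ∧ y ∈ C) e f

open Set

namespace Stmt7

variable {α : Type*} {M : Matroid α}

lemma flat_closure (M : Matroid α) (X : Set α) : M.IsFlat (M.closure X) :=
  ⟨fun I Y hIF hIY => hIY.subset_closure.trans
    (by rw [hIF.closure_eq_closure, M.closure_closure]), M.closure_subset_ground X⟩

lemma ncard_le_rk [Finite α] {J X : Set α} (hJ : M.Indep J) (hJX : J ⊆ X) :
    J.ncard ≤ M.rk X := by
  apply le_csSup
  · exact ⟨X.ncard, fun n ⟨I, _, hIX, hn⟩ => hn ▸ Set.ncard_le_ncard hIX X.toFinite⟩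
  · exact ⟨J, hJ, hJX, rfl⟩

lemma rk_basis [Finite α] {I X : Set α} (hground : M.E = Set.univ) (hI : M.IsBasis I X) :
    M.rk X = I.ncard := by
  refine le_antisymm (csSup_le ⟨I.ncard, I, hI.indep, hI.subset, rfl⟩ ?_)
    (ncard_le_rk hI.indep hI.subset)
  rintro n ⟨J, hJ, hJX, rfl⟩
  obtain ⟨J', hJ', hJJ'⟩ := hJ.subset_isBasis_of_subset hJX (by rw [hground]; exact subset_univ _)
  have h1 : J.ncard ≤ J'.ncard := Set.ncard_le_ncard hJJ' J'.toFinite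
  have h2 : J'.ncard = I.ncard := by
    have := hJ'.encard_eq_encard hI
    rw [Set.ncard_def, this, ← Set.ncard_def]
  omega

lemma closure_empty_eq (hground : M.E = Set.univ) (hloop : M.Loopless') :
    M.closure ∅ = (∅ : Set α) := by
  ext e
  simp only [mem_empty_iff_false, iff_false]
  intro he
  rw [M.empty_indep.mem_closure_iff] at he
  rcases he with h | h
  · rw [insert_empty_eq] at h
    exact (hloop e (by rw [hground]; trivial)).not_dep h
  · exact h

lemma exists_chain [Finite α] {A B : Set α} (hAB : A ⊆ B) :
    ∃ S : ℕ → Set α, S 0 = A ∧ Monotone S ∧ (∀ n, S n ⊆ B) ∧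
      ∀ n, (S n).ncard = min (A.ncard + n) B.ncard := by
  obtain ⟨m, hm⟩ : ∃ m, (B \ A).ncard = m := ⟨_, rfl⟩
  induction m using Nat.strong_induction_on generalizing A with
  | _ m IH =>
    by_cases hBA : B ⊆ A
    · have hA : A = B := hAB.antisymm hBA
      exact ⟨fun _ => B, hA.symm, monotone_const, fun _ => subset_rfl,
        fun n => by simp [hA]⟩
    · obtain ⟨x, hxB, hxA⟩ : ∃ x, x ∈ B ∧ x ∉ A := by
        rcases not_subset.mp hBA with ⟨x, h1, h2⟩; exact ⟨x, h1, h2⟩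
      have hcard : (B \ insert x A).ncard < m := by
        rw [← hm]
        apply Set.ncard_lt_ncard _ (B \ A).toFinite
        constructor
        · exact diff_subset_diff_right (subset_insert _ _)
        · intro hsub
          exact (hsub ⟨hxB, hxA⟩).2 (mem_insert _ _)
      obtain ⟨S', hS0, hSmono, hSB, hScard⟩ :=
        IH _ hcard (insert_subset hxB hAB) rfl
      refine ⟨fun n => match n with | 0 => A | (n+1) => S' n, rfl,
        monotone_nat_of_le_succ ?_, fun n => ?_, fun n => ?_⟩
      · rintro (_ | n)
        · show A ⊆ S' 0
          rw [hS0]; exact subset_insert _ _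
        · show S' n ⊆ S' (n + 1)
          exact hSmono (Nat.le_succ n)
      · cases n with
        | zero => exact hAB
        | succ n => exact hSB n
      · cases n with
        | zero => simpa using Set.ncard_le_ncard hAB B.toFinite
        | succ n =>
          have h2 : (insert x A).ncard = A.ncard + 1 := Set.ncard_insert_of_notMem hxA A.toFinite
          show (S' n).ncard = _
          rw [hScard n, h2]
          omega

lemma exists_circuit_subset [Finite α] {D : Set α} (hD : M.Dep D) :
    ∃ C ⊆ D, M.Circuit C := by
  obtain ⟨m, hm⟩ : ∃ m, D.ncard = m := ⟨_, rfl⟩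
  induction m using Nat.strong_induction_on generalizing D with
  | _ m IH =>
    by_cases h : ∀ D' ⊂ D, ¬ M.Dep D'
    · exact ⟨D, subset_rfl, hD, h⟩
    · push_neg at h
      obtain ⟨D', hD'sub, hD'⟩ := h
      have : D'.ncard < m := hm ▸ Set.ncard_lt_ncard hD'sub D.toFinite
      obtain ⟨C, hCD', hC⟩ := IH _ this hD' rfl
      exact ⟨C, hCD'.trans hD'sub.subset, hC⟩

lemma connected_of_block [Finite α] (hground : M.E = Set.univ)
    {P Q : Set α} (hPQ : P ⊆ Q) (hP : M.closure P = P) (hQrk : M.rk Q = M.rk P + 1)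
    {x y : α} (hx : x ∈ Q) (hy : y ∈ Q) (hx' : x ∉ P) (hy' : y ∉ P) :
    M.ConnectedTo x y := by
  by_cases hxy : x = y
  · exact hxy ▸ Relation.EqvGen.refl x
  obtain ⟨I, hI⟩ := M.exists_isBasis P (show P ⊆ M.E by rw [hground]; exact subset_univ _)
  have hIcl : M.closure I = P := by rw [hI.closure_eq_closure, hP]
  have hIrk : M.rk P = I.ncard := rk_basis hground hI
  have hIP : I ⊆ P := hI.subset
  have hxmem : x ∈ M.E := by rw [hground]; trivial
  have hymem : y ∈ M.E := by rw [hground]; trivial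
  have hxI : M.Indep (insert x I) ∧ x ∉ I :=
    (hI.indep.notMem_closure_iff hxmem).mp (hIcl ▸ hx')
  have hyI : M.Indep (insert y I) ∧ y ∉ I :=
    (hI.indep.notMem_closure_iff hymem).mp (hIcl ▸ hy')
  have hyxI : y ∉ insert x I := by
    simp only [mem_insert_iff]
    push_neg
    exact ⟨fun h => hxy h.symm, hyI.2⟩
  have hJQ : insert y (insert x I) ⊆ Q :=
    insert_subset hy (insert_subset hx (hIP.trans hPQ))
  have hJcard : (insert y (insert x I)).ncard = I.ncard + 2 := by
    rw [Set.ncard_insert_of_notMem hyxI (insert x I).toFinite,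
      Set.ncard_insert_of_notMem hxI.2 I.toFinite]
  have hJdep : M.Dep (insert y (insert x I)) := by
    rw [← M.not_indep_iff (by rw [hground]; exact subset_univ _)]
    intro hJ
    have := ncard_le_rk hJ hJQ
    rw [hJcard, hQrk, hIrk] at this
    omega
  obtain ⟨C, hCJ, hC⟩ := exists_circuit_subset hJdep
  have hxC : x ∈ C := by
    by_contra hxC
    refine (hC.1).not_indep (hyI.1.subset fun a ha => ?_)
    rcases hCJ ha with h | h
    · exact h ▸ mem_insert _ _
    · rcases h with h | h
      · exact absurd (h ▸ ha) hxC
      · exact mem_insert_of_mem _ h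
  have hyC : y ∈ C := by
    by_contra hyC
    refine (hC.1).not_indep (hxI.1.subset fun a ha => ?_)
    rcases hCJ ha with h | h
    · exact absurd (h ▸ ha) hyC
    · exact h
  exact Relation.EqvGen.rel x y ⟨C, hC, hxC, hyC⟩

lemma span_eval {s : Set (α → ℝ)} {v : α → ℝ} (hv : v ∈ Submodule.span ℝ s)
    {e f : α} (h : ∀ g ∈ s, g e = g f) : v e = v f := by
  have : v ∈ LinearMap.ker ((LinearMap.proj e : (α → ℝ) →ₗ[ℝ] ℝ) - LinearMap.proj f) := by
    refine Submodule.span_le.mpr (fun g hg => ?_) hv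
    simp only [SetLike.mem_coe, LinearMap.mem_ker, LinearMap.sub_apply, LinearMap.proj_apply]
    rw [h g hg, sub_self]
  simpa [sub_eq_zero] using this

end Stmt7

/-- Let `M` be a loopless matroid of rank `d + 1` on a finite ground
set `E` (taken to be all of `α`) and let `v : E → ℝ`.  Then `v` is constant on each
connected component of `M` if and only if for every full flag `F 0 ⊊ ⋯ ⊊ F (d-1)` of
proper flats with `rk (F i) = i + 1`, the vector `v` lies in the `ℝ`-linear span of the
indicator vectors of the flats of the flag together with the indicator vector of `E`. -/
theorem constant_on_components_iff_mem_span_of_flags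
    {α : Type*} {M : Matroid α} (hground : M.E = Set.univ) (hfin : M.E.Finite)
    (hloop : M.Loopless') {d : ℕ} (hrk : M.rk M.E = d + 1) (v : α → ℝ) :
    (∀ e f, M.ConnectedTo e f → v e = v f) ↔
    (∀ F : Fin d → Set α, StrictMono F → (∀ i, M.IsFlat (F i)) → (∀ i, F i ≠ M.E) →
      (∀ i : Fin d, M.rk (F i) = (i : ℕ) + 1) →
      v ∈ Submodule.span ℝ (insert (Set.indicator M.E (1 : α → ℝ))
        (Set.range fun i => Set.indicator (F i) (1 : α → ℝ)))) := by
  classical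
  have hfinα : Finite α := Set.finite_univ_iff.mp (hground ▸ hfin)
  have hsub : ∀ X : Set α, X ⊆ M.E := fun X => by rw [hground]; exact Set.subset_univ _
  constructor
  · -- forward direction
    intro hcon F hmono hflat hne hrkF
    set W : ℕ → Set α := fun i => if h : i < d then F ⟨i, h⟩ else Set.univ with hWdef
    have hWF : ∀ (i : ℕ) (h : i < d), W i = F ⟨i, h⟩ := by
      intro i h; rw [hWdef]; simp only; rw [dif_pos h]
    have hWuniv : ∀ i, d ≤ i → W i = Set.univ := by
      intro i h; rw [hWdef]; simp only; rw [dif_neg (not_lt.mpr h)]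
    have hWmono : Monotone W := by
      intro i j hij
      by_cases hi : i < d
      · by_cases hj : j < d
        · rw [hWF i hi, hWF j hj]
          exact hmono.monotone (Fin.mk_le_mk.mpr hij)
        · rw [hWuniv j (not_lt.mp hj)]; exact Set.subset_univ _
      · have hj : ¬ j < d := fun h => hi (lt_of_le_of_lt hij h)
        rw [hWuniv i (not_lt.mp hi), hWuniv j (not_lt.mp hj)]
    have hWrk : ∀ i ≤ d, M.rk (W i) = i + 1 := by
      intro i hi
      rcases lt_or_eq_of_le hi with h | h
      · rw [hWF i h]; exact hrkF ⟨i, h⟩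
      · subst h; rw [hWuniv i le_rfl, ← hground, hrk]
    have hWcl : ∀ i, M.closure (W i) = W i := by
      intro i
      by_cases h : i < d
      · rw [hWF i h]; exact (hflat ⟨i, h⟩).closure
      · rw [hWuniv i (not_lt.mp h), Matroid.closure_univ, hground]
    have hex : ∀ x : α, ∃ i, x ∈ W i := fun x => ⟨d, by rw [hWuniv d le_rfl]; trivial⟩
    set jx : α → ℕ := fun x => Nat.find (hex x) with hjxdef
    have hjxeq : ∀ x, jx x = Nat.find (hex x) := fun _ => rfl
    have hjmem : ∀ x, x ∈ W (jx x) := fun x => Nat.find_spec (hex x)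
    have hjle : ∀ x, jx x ≤ d := fun x =>
      Nat.find_le (by rw [hWuniv d le_rfl]; trivial)
    have hmem_iff : ∀ x i, x ∈ W i ↔ jx x ≤ i :=
      fun x i => ⟨fun h => Nat.find_le h, fun h => hWmono h (hjmem x)⟩
    have hnotmem : ∀ (x : α) (i : ℕ), i < jx x → x ∉ W i := by
      intro x i hi
      exact Nat.find_min (hex x) hi
    have hconst : ∀ x y, jx x = jx y → v x = v y := by
      intro x y hxy
      apply hcon
      have hyW : y ∈ W (jx x) := hxy ▸ hjmem y
      have hxW : x ∈ W (jx x) := hjmem x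
      rcases Nat.eq_zero_or_pos (jx x) with h0 | hpos
      · refine Stmt7.connected_of_block hground (P := ∅) (Q := W (jx x))
          (Set.empty_subset _) (Stmt7.closure_empty_eq hground hloop) ?_ hxW hyW
          (fun h => h) (fun h => h)
        have hrk0 : M.rk (∅ : Set α) = 0 := by
          rw [Stmt7.rk_basis hground (Matroid.empty_isBasis_iff.mpr (Set.empty_subset _)),
            Set.ncard_empty]
        rw [hrk0, hWrk _ (hjle x), h0]
      · obtain ⟨k, hk⟩ : ∃ k, jx x = k + 1 := ⟨jx x - 1, by omega⟩
        refine Stmt7.connected_of_block hground (P := W k) (Q := W (jx x))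
          (hWmono (by omega)) (hWcl k) ?_ hxW hyW ?_ ?_
        · rw [hWrk _ (hjle x), hWrk k (by have := hjle x; omega), hk]
        · exact hnotmem x k (by omega)
        · exact hnotmem y k (by rw [← hxy]; omega)
    -- the coefficients
    set u : ℕ → ℝ := fun i => if h : ∃ z : α, jx z = i then v h.choose else 0 with hudef
    have huv : ∀ x, u (jx x) = v x := by
      intro x
      have h : ∃ z : α, jx z = jx x := ⟨x, rfl⟩
      rw [hudef]; simp only; rw [dif_pos h]
      exact hconst _ x h.choose_spec
    set c : ℕ → ℝ := fun i => if i < d then u i - u (i + 1) else u d with hcdef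
    have hsum : ∀ j m, m + j = d → ∑ i ∈ Finset.Icc m d, c i = u m := by
      intro j
      induction j with
      | zero =>
        intro m hm
        have : m = d := by omega
        subst this
        rw [Finset.Icc_self, Finset.sum_singleton, hcdef]
        simp only
        rw [if_neg (lt_irrefl _)]
      | succ j IH =>
        intro m hm
        have hmd : m < d := by omega
        have hins : Finset.Icc m d = insert m (Finset.Icc (m + 1) d) := by
          ext a
          simp only [Finset.mem_Icc, Finset.mem_insert]
          omega
        rw [hins, Finset.sum_insert (by simp only [Finset.mem_Icc]; omega),
          IH (m + 1) (by omega)]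
        rw [hcdef]; simp only
        rw [if_pos hmd]; ring
    have hvsum : v = ∑ i ∈ Finset.range (d + 1),
        c i • Set.indicator (W i) (1 : α → ℝ) := by
      funext x
      rw [Finset.sum_apply]
      have hterm : ∀ i, (c i • Set.indicator (W i) (1 : α → ℝ)) x
          = if jx x ≤ i then c i else 0 := by
        intro i
        by_cases h : x ∈ W i
        · rw [if_pos ((hmem_iff x i).mp h)]
          simp [Set.indicator_of_mem h]
        · rw [if_neg (fun hle => h ((hmem_iff x i).mpr hle))]
          simp [Set.indicator_of_notMem h]
      rw [Finset.sum_congr rfl (fun i _ => hterm i), ← Finset.sum_filter]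
      have hfe : (Finset.range (d + 1)).filter (fun i => jx x ≤ i)
          = Finset.Icc (jx x) d := by
        ext a
        simp only [Finset.mem_filter, Finset.mem_range, Finset.mem_Icc]
        have := hjle x
        omega
      rw [hfe, hsum (d - jx x) (jx x) (by have := hjle x; omega), huv]
    rw [hvsum]
    apply Submodule.sum_mem
    intro i _
    apply Submodule.smul_mem
    apply Submodule.subset_span
    by_cases h : i < d
    · refine Set.mem_insert_iff.mpr (Or.inr ⟨⟨i, h⟩, ?_⟩)
      rw [hWF i h]
    · rw [hWuniv i (not_lt.mp h), ← hground]
      exact Set.mem_insert _ _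
  · -- backward direction
    intro hspan e f hef
    induction hef with
    | rel x y h =>
      obtain ⟨C, hC, hxC, hyC⟩ := h
      by_cases hxy : x = y
      · rw [hxy]
      have hssx : C \ {x} ⊂ C := ⟨Set.diff_subset, fun hsub' => (hsub' hxC).2 rfl⟩
      have hssy : C \ {y} ⊂ C := ⟨Set.diff_subset, fun hsub' => (hsub' hyC).2 rfl⟩
      have hCx : M.Indep (C \ {x}) := Matroid.indep_of_not_dep (hC.2 _ hssx) (hsub _)
      have hCy : M.Indep (C \ {y}) := Matroid.indep_of_not_dep (hC.2 _ hssy) (hsub _)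
      set I : Set α := C \ {x, y} with hIdef
      have hIxC : insert x I = C \ {y} := by
        ext a
        simp only [hIdef, Set.mem_insert_iff, Set.mem_diff, Set.mem_singleton_iff]
        constructor
        · rintro (rfl | ⟨h1, h2⟩)
          · exact ⟨hxC, hxy⟩
          · exact ⟨h1, fun h => h2 (Or.inr h)⟩
        · rintro ⟨h1, h2⟩
          by_cases hax : a = x
          · exact Or.inl hax
          · refine Or.inr ⟨h1, ?_⟩
            rintro (h | h)
            · exact hax h
            · exact h2 h
      have hIyC : insert y I = C \ {x} := by
        ext a
        simp only [hIdef, Set.mem_insert_iff, Set.mem_diff, Set.mem_singleton_iff]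
        constructor
        · rintro (rfl | ⟨h1, h2⟩)
          · exact ⟨hyC, fun h => hxy h.symm⟩
          · exact ⟨h1, fun h => h2 (Or.inl h)⟩
        · rintro ⟨h1, h2⟩
          by_cases hay : a = y
          · exact Or.inl hay
          · refine Or.inr ⟨h1, ?_⟩
            rintro (h | h)
            · exact h2 h
            · exact hay h
      have hIx : M.Indep (insert x I) := hIxC ▸ hCy
      have hIy : M.Indep (insert y I) := hIyC ▸ hCx
      have hI : M.Indep I := hIx.subset (Set.subset_insert _ _)
      have hxI : x ∉ I := fun h => h.2 (Or.inl rfl)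
      have hyI : y ∉ I := fun h => h.2 (Or.inr rfl)
      have hxcl : x ∉ M.closure I :=
        (hI.notMem_closure_iff (by rw [hground]; trivial)).mpr ⟨hIx, hxI⟩
      have hycl : y ∉ M.closure I :=
        (hI.notMem_closure_iff (by rw [hground]; trivial)).mpr ⟨hIy, hyI⟩
      have hyxcl : y ∈ M.closure (insert x I) := by
        rw [hIx.mem_closure_iff]
        left
        rw [hIxC, Set.insert_diff_singleton, Set.insert_eq_of_mem hyC]
        exact hC.1
      set k := I.ncard with hk
      obtain ⟨B, hB, hxIB⟩ := hIx.exists_isBase_superset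
      have hBcard : B.ncard = d + 1 := by
        have h1 := Stmt7.rk_basis hground hB.isBasis_ground
        rw [hrk] at h1
        exact h1.symm
      have hxIcard : (insert x I).ncard = k + 1 :=
        Set.ncard_insert_of_notMem hxI I.toFinite
      have hkd : k + 1 ≤ d + 1 := by
        have h2 := Set.ncard_le_ncard hxIB B.toFinite
        rw [hxIcard, hBcard] at h2
        exact h2
      obtain ⟨S1, hS10, hS1mono, hS1I, hS1card⟩ := Stmt7.exists_chain (Set.empty_subset I)
      obtain ⟨S2, hS20, hS2mono, hS2B, hS2card⟩ := Stmt7.exists_chain hxIB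
      have hS1card' : ∀ n, (S1 n).ncard = min n k := by
        intro n
        rw [hS1card n, Set.ncard_empty, zero_add]
      have hS2card' : ∀ n, (S2 n).ncard = min (k + 1 + n) (d + 1) := by
        intro n
        rw [hS2card n, hxIcard, hBcard]
      have hS1k : S1 k = I :=
        Set.eq_of_subset_of_ncard_le (hS1I k) (by rw [hS1card']; simp [hk]) I.toFinite
      set T : ℕ → Set α := fun n => if n ≤ k then S1 n else S2 (n - (k + 1)) with hTdef
      have hTle : ∀ n, n ≤ k → T n = S1 n := by
        intro n hn; rw [hTdef]; simp only; rw [if_pos hn]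
      have hTgt : ∀ n, ¬ n ≤ k → T n = S2 (n - (k + 1)) := by
        intro n hn; rw [hTdef]; simp only; rw [if_neg hn]
      have hTk : T k = I := by rw [hTle k le_rfl, hS1k]
      have hTk1 : T (k + 1) = insert x I := by
        rw [hTgt (k + 1) (by omega), Nat.sub_self, hS20]
      have hTmono : Monotone T := by
        intro i j hij
        by_cases hik : i ≤ k
        · by_cases hjk : j ≤ k
          · rw [hTle i hik, hTle j hjk]; exact hS1mono hij
          · rw [hTle i hik, hTgt j hjk]
            have h1 : S1 i ⊆ I := by rw [← hS1k]; exact hS1mono hik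
            have h2 : insert x I ⊆ S2 (j - (k + 1)) := by
              rw [← hS20]; exact hS2mono (Nat.zero_le _)
            exact h1.trans ((Set.subset_insert _ _).trans h2)
        · have hjk : ¬ j ≤ k := fun h => hik (hij.trans h)
          rw [hTgt i hik, hTgt j hjk]
          exact hS2mono (by omega)
      have hTcard : ∀ n, (T n).ncard = min n (d + 1) := by
        intro n
        by_cases hnk : n ≤ k
        · rw [hTle n hnk, hS1card' n]
          omega
        · rw [hTgt n hnk, hS2card']
          congr 1
          omega
      have hTB : ∀ n, T n ⊆ B := by
        intro n
        by_cases hnk : n ≤ k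
        · rw [hTle n hnk]
          exact (hS1I n).trans ((Set.subset_insert _ _).trans hxIB)
        · rw [hTgt n hnk]; exact hS2B _
      have hTindep : ∀ n, M.Indep (T n) := fun n => hB.indep.subset (hTB n)
      set G : Fin d → Set α := fun i => M.closure (T ((i : ℕ) + 1)) with hGdef
      have hGeq : ∀ i : Fin d, G i = M.closure (T ((i : ℕ) + 1)) := fun i => rfl
      have hGrk : ∀ i : Fin d, M.rk (G i) = (i : ℕ) + 1 := by
        intro i
        rw [hGeq, Stmt7.rk_basis hground (hTindep _).isBasis_closure, hTcard]
        have := i.2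
        omega
      have hGflat : ∀ i, M.IsFlat (G i) := fun i => Stmt7.flat_closure M _
      have hGne : ∀ i, G i ≠ M.E := by
        intro i h
        have h1 := hGrk i
        rw [h, hrk] at h1
        have := i.2
        omega
      have hGmono : StrictMono G := by
        intro i j hij
        have hij' : (i : ℕ) < (j : ℕ) := hij
        refine lt_of_le_of_ne (M.closure_subset_closure (hTmono (by omega))) ?_
        intro h
        have h1 := hGrk i
        have h2 := hGrk j
        rw [h] at h1
        rw [h1] at h2
        omega
      have hv := hspan G hGmono hGflat hGne hGrk
      refine Stmt7.span_eval hv ?_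
      intro g hg
      rcases Set.mem_insert_iff.mp hg with rfl | ⟨i, rfl⟩
      · rw [Set.indicator_of_mem (by rw [hground]; trivial : x ∈ M.E),
          Set.indicator_of_mem (by rw [hground]; trivial : y ∈ M.E)]
        rfl
      · show Set.indicator (G i) (1 : α → ℝ) x = Set.indicator (G i) (1 : α → ℝ) y
        have hmemiff : x ∈ G i ↔ y ∈ G i := by
          by_cases hki : k ≤ (i : ℕ)
          · have hsubT : insert x I ⊆ T ((i : ℕ) + 1) := by
              rw [← hTk1]
              exact hTmono (by omega)
            have hx' : x ∈ G i := by
              rw [hGeq]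
              exact M.subset_closure _ (hsub _) (hsubT (Set.mem_insert _ _))
            have hy' : y ∈ G i := by
              rw [hGeq]
              exact M.closure_subset_closure hsubT hyxcl
            simp [hx', hy']
          · have hsubT : T ((i : ℕ) + 1) ⊆ I := by
              rw [← hTk]
              exact hTmono (by omega)
            have hclsub : G i ⊆ M.closure I := by
              rw [hGeq]
              exact M.closure_subset_closure hsubT
            exact iff_of_false (fun h => hxcl (hclsub h)) (fun h => hycl (hclsub h))
        by_cases hmx : x ∈ G i
        · rw [Set.indicator_of_mem hmx, Set.indicator_of_mem (hmemiff.mp hmx)]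
          rfl
        · rw [Set.indicator_of_notMem hmx,
            Set.indicator_of_notMem (fun h => hmx (hmemiff.mpr h))]
    | refl x => rfl
    | symm _ _ _ ih => exact ih.symm
    | trans _ _ _ _ _ ih1 ih2 => exact ih1.trans ih2
end
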